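/- The function φ₀(x, λ) = ½(1 + 1/√ρ(x)) cos(λ μ⁺(x)) + ½(1 − 1/√ρ(x)) cos(λ μ⁻(x)) satisfies −y'' = λ² ρ(x) y on each of the intervals (0, a) and (a, π), together with the matching conditions of continuity of y and y' at x = a: φ₀(a⁻, λ) = φ₀(a⁺, λ) and ∂ₓφ₀(a⁻, λ) = ∂ₓφ₀(a⁺, λ). -/

import Mathlib

/- helpers -/
lemma hd_cos (k c b x : ℝ) :
    HasDerivAt (fun x => k * Real.cos (c * x + b)) (k * (-c * Real.sin (c * x + b))) x := by
  have h : HasDerivAt (fun x : ℝ => c * x + b) c x := by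
    simpa using ((hasDerivAt_id x).const_mul c).add_const b
  have := ((Real.hasDerivAt_cos (c * x + b)).comp x h).const_mul k
  simpa [mul_comm, mul_left_comm, mul_assoc] using this

lemma hd_sin (k c b x : ℝ) :
    HasDerivAt (fun x => k * (-c * Real.sin (c * x + b))) (-(k * c ^ 2 * Real.cos (c * x + b))) x := by
  have h : HasDerivAt (fun x : ℝ => c * x + b) c x := by
    simpa using ((hasDerivAt_id x).const_mul c).add_const b
  have := ((Real.hasDerivAt_sin (c * x + b)).comp x h).const_mul (k * (-c))
  have h2 : HasDerivAt (fun x => k * (-c * Real.sin (c * x + b)))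
      (k * -c * (Real.cos (c * x + b) * c)) x := by
    simpa [mul_assoc] using this
  convert h2 using 1
  ring


/-- φ₀ solves −y'' = λ²ρy on (0,a) and (a,π), with continuity of y and y' at a.
On (0,a) φ₀(·,λ) coincides with g₁ x = cos (λ x); on (a,π) it coincides with
g₂ x = ½(1+1/α)cos(λ(αx+a(1−α))) + ½(1−1/α)cos(λ(−αx+a(1+α))). -/
theorem stmt4 (a α lam : ℝ) (ha : 0 < a) (haπ : a < Real.pi) (hα : 0 < α)
    (ρ : ℝ → ℝ) (hρ : ∀ x, ρ x = if x ≤ a then 1 else α ^ 2)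
    (g₁ g₂ : ℝ → ℝ)
    (hg₁ : ∀ x, g₁ x = Real.cos (lam * x))
    (hg₂ : ∀ x, g₂ x =
      (1 / 2) * (1 + 1 / α) * Real.cos (lam * (α * x + a * (1 - α))) +
      (1 / 2) * (1 - 1 / α) * Real.cos (lam * (-α * x + a * (1 + α)))) :
    (∀ x ∈ Set.Ioo (0 : ℝ) a, deriv (deriv g₁) x = -(lam ^ 2 * ρ x * g₁ x)) ∧
    (∀ x ∈ Set.Ioo a Real.pi, deriv (deriv g₂) x = -(lam ^ 2 * ρ x * g₂ x)) ∧
    g₁ a = g₂ a ∧ deriv g₁ a = deriv g₂ a := by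
  have hαne : α ≠ 0 := ne_of_gt hα
  -- rewrite g₁, g₂ in canonical form
  have hG1 : g₁ = fun x => 1 * Real.cos (lam * x + 0) := by
    funext x; rw [hg₁]; norm_num
  set k₁ : ℝ := (1 / 2) * (1 + 1 / α) with hk₁
  set k₂ : ℝ := (1 / 2) * (1 - 1 / α) with hk₂
  have hG2 : g₂ = fun x => k₁ * Real.cos ((lam * α) * x + lam * (a * (1 - α))) +
      k₂ * Real.cos ((-(lam * α)) * x + lam * (a * (1 + α))) := by
    funext x; rw [hg₂]; ring_nf
  -- first derivatives
  have hd1 : deriv g₁ = fun x => 1 * (-lam * Real.sin (lam * x + 0)) := by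
    funext x; rw [hG1]; exact (hd_cos 1 lam 0 x).deriv
  have hd2 : deriv g₂ = fun x => 1 * (k₁ * (-(lam * α) * Real.sin ((lam * α) * x + lam * (a * (1 - α)))) +
      k₂ * (-(-(lam * α)) * Real.sin ((-(lam * α)) * x + lam * (a * (1 + α))))) := by
    funext x; rw [hG2]
    have := ((hd_cos k₁ (lam * α) (lam * (a * (1 - α))) x).add
      (hd_cos k₂ (-(lam * α)) (lam * (a * (1 + α))) x)).deriv
    simp only [Pi.add_def] at this
    rw [this]; ring
  refine ⟨?_, ?_, ?_, ?_⟩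
  · intro x hx
    rw [hd1]
    have := ((hd_sin 1 lam 0 x)).deriv
    simp only [one_mul] at this ⊢
    rw [this, hρ x, if_pos (le_of_lt hx.2), hg₁]
    ring_nf
  · intro x hx
    rw [hd2]
    have h := (((hd_sin k₁ (lam * α) (lam * (a * (1 - α))) x).add
      (hd_sin k₂ (-(lam * α)) (lam * (a * (1 + α))) x)).const_mul 1).deriv
    simp only [Pi.add_apply] at h
    rw [h, hρ x, if_neg (not_le.mpr hx.1), hg₂]
    ring_nf
  · rw [hg₁, hg₂]
    have e1 : lam * (α * a + a * (1 - α)) = lam * a := by ring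
    have e2 : lam * (-α * a + a * (1 + α)) = lam * a := by ring
    rw [e1, e2, hk₁, hk₂]; ring
  · simp only [hd1, hd2]
    rw [show lam * α * a + lam * (a * (1 - α)) = lam * a by ring,
      show -(lam * α) * a + lam * (a * (1 + α)) = lam * a by ring, add_zero, hk₁, hk₂]
    field_simp
    ring
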